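/- arXiv:2106.14979 — 3 statements merged into one kernel-verified Lean document; each statement's English description precedes it below -/
import Mathlib

section
/- With mean rewards r̄ = (1/4, 1/2, 1) for items a₁, a₂, a₃ having restricted features x_{a₁} = (0,−1), x_{a₂} = (1,0), x_{a₃} = (0,1), the 'training-on-all' least-squares solution θ = (r̄₂, (r̄₃ − r̄₁)/2) = (1/2, 3/8) satisfies ⟨θ, x_{a₂}⟩ > ⟨θ, x_{a₃}⟩, so the nominator with pool {a₂, a₃} selects the suboptimal item a₂ (whose mean reward 1/2 is less than r̄₃ = 1); whereas the 'training-on-own' solution θ' = (r̄₂, r̄₃) = (1/2, 1) satisfies ⟨θ', x_{a₃}⟩ > ⟨θ', x_{a₂}⟩ and correctly selects a₃. -/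
/-- With mean rewards `r̄ = (1/4, 1/2, 1)` and restricted item features
`x₁ = (0,−1)`, `x₂ = (1,0)`, `x₃ = (0,1)`, the training-on-all least-squares
solution `θ = (1/2, 3/8)` makes the nominator with pool `{a₂, a₃}` select the
suboptimal item `a₂`, whereas the training-on-own solution `θ' = (1/2, 1)`
correctly selects `a₃`. -/
theorem training_on_all_fails_training_on_own_succeeds :
    let r1 : ℝ := 1 / 4
    let r2 : ℝ := 1 / 2
    let r3 : ℝ := 1
    let x1 : ℝ × ℝ := (0, -1)
    let x2 : ℝ × ℝ := (1, 0)
    let x3 : ℝ × ℝ := (0, 1)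
    let dot : ℝ × ℝ → ℝ × ℝ → ℝ := fun u v => u.1 * v.1 + u.2 * v.2
    let θ : ℝ × ℝ := (r2, (r3 - r1) / 2)
    let θ' : ℝ × ℝ := (r2, r3)
    -- θ is the training-on-all least-squares solution
    (∀ β : ℝ × ℝ,
      (r1 - dot θ x1) ^ 2 + (r2 - dot θ x2) ^ 2 + (r3 - dot θ x3) ^ 2
        ≤ (r1 - dot β x1) ^ 2 + (r2 - dot β x2) ^ 2 + (r3 - dot β x3) ^ 2)
    ∧ θ = (1 / 2, 3 / 8)
    -- training-on-all selects the suboptimal item a₂ from the pool {a₂, a₃}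
    ∧ dot θ x2 > dot θ x3
    ∧ r2 < r3
    -- θ' is the training-on-own least-squares solution (fit on the pool only)
    ∧ (∀ β : ℝ × ℝ,
        (r2 - dot θ' x2) ^ 2 + (r3 - dot θ' x3) ^ 2
          ≤ (r2 - dot β x2) ^ 2 + (r3 - dot β x3) ^ 2)
    ∧ θ' = (1 / 2, 1)
    -- training-on-own correctly selects a₃
    ∧ dot θ' x3 > dot θ' x2 := by
  refine ⟨fun β => ?_, by norm_num, by norm_num, by norm_num, fun β => ?_, by norm_num, by norm_num⟩ <;>
    simp only <;> nlinarith [sq_nonneg (β.1 - 1/2), sq_nonneg (β.2 - 3/8), sq_nonneg (β.2 - 1)]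
end

section
/- Under the bandit construction with contexts drawn uniformly from {X_{(1)}, …, X_{(4)}} (X = [[1,0,0,−1],[0,1,0,−1],[0,0,1,0],[0,0,0,1]], r̄ = (3/4, 7/8, 1/6, 1)), nominators restricted to the last two feature columns, pools A₁ = {a₁}, A₂ = {a₂,a₃,a₄}, and a nominator satisfying the greedy-selection assumption with constant δ > 0: if the nominator's estimate converges in probability to the 'training-on-own' limit θ₂* = (1/6, 1/16), then the expected two-stage regret satisfies limsup_T E[R_T^{2s}]/T ≥ Δδ/4 > 0 with Δ = 1/6, because θ*₂,₂ = 1/16 > 0 causes the nominator to miss a₂ whenever X_{(2)} is drawn. -/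
open MeasureTheory ProbabilityTheory Filter Topology

/-- Bandit construction of Proposition 2: contexts drawn uniformly from
`{X_{(1)},…,X_{(4)}}` with `X = [[1,0,0,−1],[0,1,0,−1],[0,0,1,0],[0,0,0,1]]`
and `r̄ = (3/4, 7/8, 1/6, 1)`; nominator 2 (pool `{a₂,a₃,a₄}`) sees the last
two feature columns and satisfies the greedy-selection assumption with
constant `δ > 0`. If its estimate converges in probability to the
training-on-own limit `θ₂* = (1/6, 1/16)`, then
`limsup_T E[R_T^{2s}]/T ≥ Δδ/4` with `Δ = 1/6`. -/
theorem training_on_own_linear_regret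
    {Ω : Type*} [MeasurableSpace Ω] (μ : Measure Ω) [IsProbabilityMeasure μ]
    -- context index: X_{(j t)} is drawn at round t, uniformly
    (j : ℕ → Ω → Fin 4) (hjmeas : ∀ t, Measurable (j t))
    (hjunif : ∀ t (k : Fin 4), μ {ω | j t ω = k} = 1 / 4)
    -- the nominator's estimate converges in probability to (1/6, 1/16)
    (θhat : ℕ → Ω → ℝ × ℝ) (hθmeas : ∀ t, Measurable (θhat t))
    (hθconv : TendstoInMeasure μ θhat atTop
      (fun _ => ((1 / 6 : ℝ), (1 / 16 : ℝ))))
    -- nominator 2 nominates from its pool {a₂, a₃, a₄} (indices ≠ 0)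
    (N2 : ℕ → Ω → Fin 4) (hNmeas : ∀ t, Measurable (N2 t))
    (hpool : ∀ t ω, N2 t ω ≠ 0)
    -- the ranker chooses from the candidate pool {a₁, nominee}
    (a : ℕ → Ω → Fin 4) (hameas : ∀ t, Measurable (a t))
    (hchoice : ∀ t ω, a t ω = 0 ∨ a t ω = N2 t ω)
    (δ : ℝ) (hδ : 0 < δ) :
    -- restricted features: under context X_{(k)}, arm b has the last two
    -- coordinates of row b of X_{(k)}
    let rbar : Fin 4 → ℝ := ![3 / 4, 7 / 8, 1 / 6, 1]
    let X : Matrix (Fin 4) (Fin 4) ℝ :=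
      !![1, 0, 0, (-1 : ℝ); 0, 1, 0, -1; 0, 0, 1, 0; 0, 0, 0, 1]
    let φ : Fin 4 → Fin 4 → ℝ × ℝ :=
      fun k b => if b = k then (X b 2, X b 3) else (0, 0)
    let score : ℝ × ℝ → Fin 4 → Fin 4 → ℝ :=
      fun θ k b => θ.1 * (φ k b).1 + θ.2 * (φ k b).2
    -- greedy event: the nominee maximizes the fitted score over the pool
    let G : ℕ → Set Ω := fun t =>
      {ω | ∀ b : Fin 4, b ≠ 0 →
        score (θhat t ω) (j t ω) b ≤ score (θhat t ω) (j t ω) (N2 t ω)}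
    -- greedy-selection assumption conditioned on the optimal arm being a₂
    δ ≤ atTop.limsup (fun T : ℕ =>
        (∑ t ∈ Finset.range T,
          4 * (μ (G t ∩ {ω | j t ω = 1})).toReal) / T) →
    -- conclusion: linear expected two-stage regret, with Δ = 1/6
    (1 / 6 : ℝ) * δ / 4 ≤ atTop.limsup (fun T : ℕ =>
        (∫ ω, (∑ t ∈ Finset.range T,
          (rbar (j t ω) -
            if a t ω = j t ω then rbar (j t ω) else 0)) ∂μ) / T) := by
  intro rbar X φ score G
  classical
  set f : ℕ → ℝ := fun T : ℕ =>
      (∑ t ∈ Finset.range T, 4 * (μ (G t ∩ {ω | j t ω = 1})).toReal) / T with hfdef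
  set g : ℕ → ℝ := fun T : ℕ =>
      (∫ ω, (∑ t ∈ Finset.range T,
        (rbar (j t ω) - if a t ω = j t ω then rbar (j t ω) else 0)) ∂μ) / T with hgdef
  intro hδle
  -- abbreviations
  set term : ℕ → Ω → ℝ := fun t ω =>
      rbar (j t ω) - if a t ω = j t ω then rbar (j t ω) else 0 with htermdef
  set E : ℕ → Set Ω := fun t =>
      G t ∩ {ω | j t ω = 1} ∩ {ω | 0 < (θhat t ω).2} with hEdef
  set c : ℕ → ℝ := fun t => (μ {ω | (θhat t ω).2 ≤ 0}).toReal with hcdef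
  set A : ℕ → Set Ω := fun t => G t ∩ {ω | j t ω = 1} with hAdef
  -- basic facts about rbar
  have hrb : ∀ k : Fin 4, 0 ≤ rbar k ∧ rbar k ≤ 1 := by
    intro k
    fin_cases k <;> constructor <;> norm_num [rbar]
  -- measurability of term
  have hterm_meas : ∀ t, Measurable (term t) := by
    intro t
    have : term t = (fun p : Fin 4 × Fin 4 =>
        rbar p.2 - if p.1 = p.2 then rbar p.2 else 0) ∘ (fun ω => (a t ω, j t ω)) := rfl
    rw [this]
    exact (measurable_of_countable _).comp ((hameas t).prodMk (hjmeas t))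
  have hterm_nonneg : ∀ t ω, 0 ≤ term t ω := by
    intro t ω
    rcases eq_or_ne (a t ω) (j t ω) with h | h
    · simp [htermdef, h]
    · simp only [htermdef, if_neg h, sub_zero]
      exact (hrb _).1
  have hterm_le : ∀ t ω, term t ω ≤ 1 := by
    intro t ω
    have h1 := (hrb (j t ω)).2
    have h0 : (0:ℝ) ≤ if a t ω = j t ω then rbar (j t ω) else 0 := by
      split
      · exact (hrb _).1
      · exact le_refl 0
    simp only [htermdef]
    linarith
  have hterm_int : ∀ t, Integrable (term t) μ := by
    intro t
    refine (integrable_const (1:ℝ)).mono' (hterm_meas t).aestronglyMeasurable ?_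
    filter_upwards with ω
    rw [Real.norm_eq_abs, abs_le]
    exact ⟨by linarith [hterm_nonneg t ω], hterm_le t ω⟩
  -- measurability of G and E
  have hGmeas : ∀ t, MeasurableSet (G t) := by
    intro t
    have hGeq : G t = ⋂ b : Fin 4, {ω | b ≠ 0 →
        score (θhat t ω) (j t ω) b ≤ score (θhat t ω) (j t ω) (N2 t ω)} := by
      ext ω; simp only [Set.mem_iInter]; rfl
    rw [hGeq]
    refine MeasurableSet.iInter fun b => ?_
    rcases eq_or_ne b 0 with hb | hb
    · simp [hb]
    · have : {ω | b ≠ 0 → score (θhat t ω) (j t ω) b ≤ score (θhat t ω) (j t ω) (N2 t ω)}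
          = {ω | score (θhat t ω) (j t ω) b ≤ score (θhat t ω) (j t ω) (N2 t ω)} := by
        ext ω; simp [hb]
      rw [this]
      have msc : ∀ (B : Ω → Fin 4), Measurable B →
          Measurable (fun ω => score (θhat t ω) (j t ω) (B ω)) := by
        intro B hB
        have : (fun ω => score (θhat t ω) (j t ω) (B ω))
            = (fun ω => (θhat t ω).1 *
                (((fun p : Fin 4 × Fin 4 => (φ p.1 p.2).1) ∘ (fun ω => (j t ω, B ω))) ω)
              + (θhat t ω).2 *
                (((fun p : Fin 4 × Fin 4 => (φ p.1 p.2).2) ∘ (fun ω => (j t ω, B ω))) ω)) := rfl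
        rw [this]
        exact ((hθmeas t).fst.mul
            ((measurable_of_countable _).comp ((hjmeas t).prodMk hB))).add
          ((hθmeas t).snd.mul
            ((measurable_of_countable _).comp ((hjmeas t).prodMk hB)))
      exact measurableSet_le (msc (fun _ => b) measurable_const) (msc (N2 t) (hNmeas t))
  have hjset : ∀ t, MeasurableSet {ω | j t ω = 1} := by
    intro t
    have : {ω | j t ω = 1} = j t ⁻¹' {1} := rfl
    rw [this]
    exact hjmeas t (measurableSet_singleton 1)
  have hEmeas : ∀ t, MeasurableSet (E t) := fun t =>
    ((hGmeas t).inter (hjset t)).inter (measurableSet_lt measurable_const (hθmeas t).snd)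
  -- the key arm argument
  have hkey : ∀ t ω, ω ∈ G t → j t ω = 1 → 0 < (θhat t ω).2 → a t ω ≠ 1 := by
    intro t ω hG hj hθ hA1
    have h2 : score (θhat t ω) (j t ω) 2 ≤ score (θhat t ω) (j t ω) (N2 t ω) :=
      hG 2 (by decide)
    have hN : N2 t ω = 1 := by
      rcases hchoice t ω with h | h
      · rw [hA1] at h; exact absurd h (by decide)
      · rw [← h, hA1]
    rw [hj, hN] at h2
    have e1 : score (θhat t ω) 1 2 = (θhat t ω).1 * 0 + (θhat t ω).2 * 0 := rfl
    have e2 : score (θhat t ω) 1 1 = (θhat t ω).1 * 0 + (θhat t ω).2 * (-1) := rfl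
    rw [e1, e2] at h2
    nlinarith
  -- value of the term on E
  have hval : ∀ t ω, ω ∈ E t → 1/6 ≤ term t ω := by
    intro t ω hω
    obtain ⟨⟨hG, hj⟩, hθ⟩ := hω
    have hj' : j t ω = 1 := hj
    have hane1 : a t ω ≠ 1 := hkey t ω hG hj hθ
    simp only [htermdef, hj', if_neg hane1, sub_zero]
    norm_num [rbar, Matrix.cons_val_one, Matrix.head_cons]
  -- per-round integral lower bound
  have hInt : ∀ t, (1/6 : ℝ) * (μ (E t)).toReal ≤ ∫ ω, term t ω ∂μ := by
    intro t
    have hind : ∀ ω, (E t).indicator (fun _ => (1/6 : ℝ)) ω ≤ term t ω := by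
      intro ω
      by_cases hω : ω ∈ E t
      · rw [Set.indicator_of_mem hω]; exact hval t ω hω
      · rw [Set.indicator_of_notMem hω]; exact hterm_nonneg t ω
    calc (1/6 : ℝ) * (μ (E t)).toReal
        = ∫ ω, (E t).indicator (fun _ => (1/6:ℝ)) ω ∂μ := by
          rw [integral_indicator_const _ (hEmeas t), smul_eq_mul, mul_comm]; rfl
      _ ≤ _ := integral_mono ((integrable_const _).indicator (hEmeas t))
            (hterm_int t) hind
  -- measure lower bound for E
  have hmeasE : ∀ t, (μ (A t)).toReal - c t ≤ (μ (E t)).toReal := by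
    intro t
    have hsub : A t ⊆ E t ∪ {ω | (θhat t ω).2 ≤ 0} := by
      intro ω hω
      rcases lt_or_ge 0 (θhat t ω).2 with h | h
      · exact Or.inl ⟨hω, h⟩
      · exact Or.inr h
    have h1 : μ (A t) ≤ μ (E t) + μ {ω | (θhat t ω).2 ≤ 0} :=
      (measure_mono hsub).trans (measure_union_le _ _)
    have h2 := ENNReal.toReal_mono
      (ENNReal.add_ne_top.mpr ⟨measure_ne_top μ _, measure_ne_top μ _⟩) h1
    rw [ENNReal.toReal_add (measure_ne_top μ _) (measure_ne_top μ _)] at h2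
    simp only [hcdef]
    linarith
  -- c t → 0
  have hc0 : Tendsto c atTop (𝓝 0) := by
    have h1 := hθconv (1/16) (by norm_num)
    have hsub : ∀ t, {ω | (θhat t ω).2 ≤ 0}
        ⊆ {ω | 1/16 ≤ dist (θhat t ω) (((1/6 : ℝ), (1/16 : ℝ)))} := by
      intro t ω hω
      have hω' : (θhat t ω).2 ≤ 0 := hω
      have hd : dist (θhat t ω).2 (1/16 : ℝ) ≤ dist (θhat t ω) (((1/6:ℝ), (1/16:ℝ))) := by
        rw [Prod.dist_eq]; exact le_max_right _ _
      have hd2 : (1:ℝ)/16 ≤ dist (θhat t ω).2 (1/16 : ℝ) := by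
        rw [Real.dist_eq, abs_sub_comm, abs_of_nonneg (by linarith)]
        linarith
      exact le_trans hd2 hd
    have h2 : Tendsto (fun t => μ {ω | (θhat t ω).2 ≤ 0}) atTop (𝓝 0) :=
      tendsto_of_tendsto_of_tendsto_of_le_of_le tendsto_const_nhds h1
        (fun t => zero_le) (fun t => measure_mono fun ω hω => by
          have h := hsub t hω
          simp only [Set.mem_setOf_eq] at h ⊢
          rw [edist_dist]
          calc (1:ENNReal)/16 = ENNReal.ofReal (1/16) := by
                rw [ENNReal.ofReal_div_of_pos (by norm_num)]; simp
            _ ≤ _ := ENNReal.ofReal_le_ofReal h)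
    have h3 := (ENNReal.tendsto_toReal (by simp : (0:ENNReal) ≠ ⊤)).comp h2
    simpa [hcdef, Function.comp_def] using h3
  have hC : Tendsto (fun T : ℕ => (∑ t ∈ Finset.range T, c t) / T) atTop (𝓝 0) := by
    have h := hc0.cesaro
    simpa [div_eq_inv_mul] using h
  -- main per-T inequality
  have hmain : ∀ T : ℕ,
      (1/24 : ℝ) * f T - (1/6) * ((∑ t ∈ Finset.range T, c t) / T) ≤ g T := by
    intro T
    rcases Nat.eq_zero_or_pos T with hT | hT
    · subst hT
      simp [hfdef, hgdef]
    have hTpos : (0:ℝ) < T := by exact_mod_cast hT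
    have hI : g T = (∑ t ∈ Finset.range T, ∫ ω, term t ω ∂μ) / T := by
      rw [hgdef]
      simp only
      rw [integral_finset_sum _ (fun t _ => hterm_int t)]
    have hS : (1/6 : ℝ) * (∑ t ∈ Finset.range T, (μ (A t)).toReal)
        - (1/6) * (∑ t ∈ Finset.range T, c t)
        ≤ ∑ t ∈ Finset.range T, ∫ ω, term t ω ∂μ := by
      have h1 : ∑ t ∈ Finset.range T, ((μ (A t)).toReal - c t)
          ≤ ∑ t ∈ Finset.range T, (μ (E t)).toReal :=
        Finset.sum_le_sum fun t _ => hmeasE t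
      rw [Finset.sum_sub_distrib] at h1
      have h2 : ∑ t ∈ Finset.range T, (1/6 : ℝ) * (μ (E t)).toReal
          ≤ ∑ t ∈ Finset.range T, ∫ ω, term t ω ∂μ :=
        Finset.sum_le_sum fun t _ => hInt t
      rw [← Finset.mul_sum] at h2
      linarith
    have hfT : f T = (4 * ∑ t ∈ Finset.range T, (μ (A t)).toReal) / T := by
      rw [hfdef]
      simp only [hAdef]
      rw [Finset.mul_sum]
    rw [hI, hfT]
    have hdiv : ((1/6 : ℝ) * (∑ t ∈ Finset.range T, (μ (A t)).toReal)
        - (1/6) * (∑ t ∈ Finset.range T, c t)) / T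
        ≤ (∑ t ∈ Finset.range T, ∫ ω, term t ω ∂μ) / T :=
      div_le_div_of_nonneg_right hS (le_of_lt hTpos)
    have heq : (1/24 : ℝ) * ((4 * ∑ t ∈ Finset.range T, (μ (A t)).toReal) / T)
        - (1/6) * ((∑ t ∈ Finset.range T, c t) / T)
        = ((1/6 : ℝ) * (∑ t ∈ Finset.range T, (μ (A t)).toReal)
            - (1/6) * (∑ t ∈ Finset.range T, c t)) / T := by
      field_simp
      ring
    linarith
  -- bounds on f and g
  have hg_le1 : ∀ T : ℕ, g T ≤ 1 := by
    intro T
    rcases Nat.eq_zero_or_pos T with hT | hT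
    · subst hT; simp [hgdef]
    have hTpos : (0:ℝ) < T := by exact_mod_cast hT
    have hIle : (∫ ω, (∑ t ∈ Finset.range T, term t ω) ∂μ) ≤ T := by
      have h1 : (∫ ω, (∑ t ∈ Finset.range T, term t ω) ∂μ)
          ≤ ∫ _, (T : ℝ) ∂μ := by
        refine integral_mono (integrable_finset_sum _ (fun t _ => hterm_int t))
          (integrable_const _) ?_
        intro ω
        calc ∑ t ∈ Finset.range T, term t ω ≤ ∑ _t ∈ Finset.range T, (1:ℝ) :=
              Finset.sum_le_sum fun t _ => hterm_le t ω
          _ = T := by simp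
      simpa using h1
    rw [hgdef]
    simp only
    rw [div_le_one hTpos]
    exact hIle
  have hf_nonneg : ∀ T : ℕ, 0 ≤ f T := by
    intro T
    rw [hfdef]
    refine div_nonneg (Finset.sum_nonneg fun t _ => ?_) (Nat.cast_nonneg T)
    positivity
  -- final limsup argument
  have hgoal : (1/6 : ℝ) * δ / 4 = δ / 24 := by ring
  rw [hgoal]
  have hbound : IsBoundedUnder (· ≤ ·) atTop g :=
    isBoundedUnder_of ⟨1, fun T => hg_le1 T⟩
  have hcob : IsCoboundedUnder (· ≤ ·) atTop f :=
    IsBoundedUnder.isCoboundedUnder_le (isBoundedUnder_of ⟨0, fun T => hf_nonneg T⟩)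
  refine le_of_forall_sub_le fun ε hε => ?_
  have hfreq : ∃ᶠ T in atTop, δ - ε < f T :=
    frequently_lt_of_lt_limsup hcob (lt_of_lt_of_le (by linarith) hδle)
  have hev : ∀ᶠ T in atTop, (∑ t ∈ Finset.range T, c t) / T < ε :=
    hC.eventually (gt_mem_nhds hε)
  have hfreq2 : ∃ᶠ T in atTop, δ / 24 - ε ≤ g T := by
    refine (hfreq.and_eventually hev).mono ?_
    rintro T ⟨h1, h2⟩
    have h3 := hmain T
    linarith
  exact le_limsup_of_frequently_le hfreq2 hbound
end

section
/- For the 'training-on-all' weighted least squares with features (0,−1), (0,−1), (1,0), (0,1) and rewards r̄ = (3/4, 7/8, 1/6, 1), the limit solution is θ = (1/6, (1 − 7/8 − 3/4)/3) = (1/6, −5/24), whose second coordinate is strictly negative, so a greedy nominator using θ prefers the zero-feature arms over the arm with feature (0,1) (the optimal arm a₄ under context X_{(4)}), whereas 'training-on-own' (dropping the first data point) yields θ' = (1/6, 1/16) with strictly positive second coordinate, which correctly ranks the (0,1) arm highest. -/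
/-- For training-on-all weighted least squares with restricted features
`(0,−1), (0,−1), (1,0), (0,1)` and rewards `r̄ = (3/4, 7/8, 1/6, 1)`, the
limit solution is `θ = (1/6, −5/24)`: its second coordinate is negative, so a
greedy nominator prefers the zero-feature arms over the arm with feature
`(0,1)` (optimal under `X_{(4)}`); training-on-own (dropping the first data
point) yields `θ' = (1/6, 1/16)` with positive second coordinate, which
correctly ranks the `(0,1)` arm highest. -/
theorem training_on_all_vs_own_weighted_least_squares :
    let r1 : ℝ := 3 / 4
    let r2 : ℝ := 7 / 8
    let r3 : ℝ := 1 / 6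
    let r4 : ℝ := 1
    let x1 : ℝ × ℝ := (0, -1)
    let x2 : ℝ × ℝ := (0, -1)
    let x3 : ℝ × ℝ := (1, 0)
    let x4 : ℝ × ℝ := (0, 1)
    let dot : ℝ × ℝ → ℝ × ℝ → ℝ := fun u v => u.1 * v.1 + u.2 * v.2
    let θ : ℝ × ℝ := (1 / 6, -(5 / 24))
    let θ' : ℝ × ℝ := (1 / 6, 1 / 16)
    -- θ minimizes the training-on-all objective
    (∀ β : ℝ × ℝ,
      (r1 - dot θ x1) ^ 2 + (r2 - dot θ x2) ^ 2 + (r3 - dot θ x3) ^ 2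
          + (r4 - dot θ x4) ^ 2
        ≤ (r1 - dot β x1) ^ 2 + (r2 - dot β x2) ^ 2 + (r3 - dot β x3) ^ 2
          + (r4 - dot β x4) ^ 2)
    ∧ θ.2 = (r4 - r2 - r1) / 3
    ∧ θ.2 < 0
    -- greedy with θ prefers zero-feature arms over the (0,1) arm
    ∧ dot θ x4 < 0
    -- θ' minimizes the training-on-own objective (first data point dropped)
    ∧ (∀ β : ℝ × ℝ,
        (r2 - dot θ' x2) ^ 2 + (r3 - dot θ' x3) ^ 2 + (r4 - dot θ' x4) ^ 2
          ≤ (r2 - dot β x2) ^ 2 + (r3 - dot β x3) ^ 2 + (r4 - dot β x4) ^ 2)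
    ∧ θ'.2 = (r4 - r2) / 2
    ∧ 0 < θ'.2
    -- θ' correctly ranks the (0,1) arm highest (others score 0 under X₍₄₎)
    ∧ 0 < dot θ' x4 := by
  intro r1 r2 r3 r4 x1 x2 x3 x4 dot θ θ'
  refine ⟨?_, by norm_num, by norm_num, by norm_num [dot, θ, x4], ?_, by norm_num, by norm_num, by norm_num [dot, θ', x4]⟩
  · intro β
    simp only [dot, θ, x1, x2, x3, x4, r1, r2, r3, r4]
    nlinarith [sq_nonneg (β.1 - 1/6), sq_nonneg (β.2 + 5/24)]
  · intro β
    simp only [dot, θ', x2, x3, x4, r2, r3, r4]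
    nlinarith [sq_nonneg (β.1 - 1/6), sq_nonneg (β.2 - 1/16)]
end
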